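/- Let n ≥ 5 and let G be an n-vertex unicyclic graph. Let U_2 be the n-vertex unicyclic graph obtained from the path v_1 v_2 … v_n by adding the edge v_1 v_3. Then τ(G) ≤ τ(U_2); that is, U_2 has the maximal total-eccentricity index among all n-vertex unicyclic graphs. -/

import Mathlib

set_option linter.unusedSectionVars false
set_option maxHeartbeats 1600000

open SimpleGraph Finset

/-- The eccentricity of a vertex `v` in a graph `G`: the maximum distance from `v`
to any vertex of `G`. -/
noncomputable def ecc {V : Type} [Fintype V] (G : SimpleGraph V) (v : V) : ℕ :=
  Finset.univ.sup fun w => G.dist v w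

/-- The total-eccentricity index `τ(G) = ∑_{v ∈ V(G)} e_G(v)`. -/
noncomputable def totalEcc {V : Type} [Fintype V] (G : SimpleGraph V) : ℕ :=
  ∑ v : V, ecc G v



/-- Recursive bound function: F 3 = 3, F (m+1) = F m + m + m/2 for m ≥ 3. -/
def Fb : ℕ → ℕ
  | 0 => 0
  | 1 => 0
  | 2 => 0
  | 3 => 3
  | (m+4) => Fb (m+3) + (m+3) + (m+3)/2

lemma Fb_succ {m : ℕ} (hm : 3 ≤ m) : Fb (m+1) = Fb m + m + m/2 := by
  obtain ⟨k, rfl⟩ := Nat.exists_eq_add_of_le hm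
  rw [Nat.add_comm 3 k]
  rfl

lemma Fb_odd : ∀ j, Fb (2*j+5) + 1 = 3*(j+2)*(j+2) + (j+2) := by
  intro j
  induction j with
  | zero => decide
  | succ i ih =>
    have r1 : Fb (2*i+5+1) = Fb (2*i+5) + (2*i+5) + (2*i+5)/2 := Fb_succ (by omega)
    have r2 : Fb (2*i+6+1) = Fb (2*i+6) + (2*i+6) + (2*i+6)/2 := Fb_succ (by omega)
    have d1 : (2*i+5)/2 = i+2 := by omega
    have d2 : (2*i+6)/2 = i+3 := by omega
    have e1 : 2*i+5+1 = 2*i+6 := by omega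
    have e2 : 2*i+6+1 = 2*(i+1)+5 := by omega
    rw [d1, e1] at r1
    rw [d2, e2] at r2
    nlinarith [ih, r1, r2]

lemma Fb_even : ∀ j, Fb (2*j+4) + 1 + 2*(j+2) = 3*(j+2)*(j+2) := by
  intro j
  cases j with
  | zero => decide
  | succ i =>
    have r1 : Fb (2*i+5+1) = Fb (2*i+5) + (2*i+5) + (2*i+5)/2 := Fb_succ (by omega)
    have d1 : (2*i+5)/2 = i+2 := by omega
    have e1 : 2*i+5+1 = 2*(i+1)+4 := by omega
    rw [d1, e1] at r1
    nlinarith [Fb_odd i, r1]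

/-- cycle bound: n * (n/2) ≤ Fb n for n ≥ 5 -/
lemma cycle_le_Fb : ∀ n : ℕ, 5 ≤ n → n * (n/2) ≤ Fb n := by
  intro n hn
  rcases Nat.even_or_odd' n with ⟨k, rfl | rfl⟩
  · obtain ⟨j, rfl⟩ : ∃ j, k = j + 3 := ⟨k - 3, by omega⟩
    have e1 : 2*(j+3) = 2*(j+1)+4 := by omega
    have d1 : (2*(j+1)+4)/2 = j+3 := by omega
    rw [e1, d1]
    nlinarith [Fb_even (j+1)]
  · obtain ⟨j, rfl⟩ : ∃ j, k = j + 2 := ⟨k - 2, by omega⟩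
    have e1 : 2*(j+2)+1 = 2*j+5 := by omega
    have d1 : (2*j+5)/2 = j+2 := by omega
    rw [e1, d1]
    nlinarith [Fb_odd j]

/-- cycle+pendant bound: M*(M/2) + M/2 + 3 ≤ Fb (M+1) for M ≥ 3 -/
lemma cyclePendant_le_Fb : ∀ M : ℕ, 3 ≤ M → M * (M/2) + M/2 + 3 ≤ Fb (M+1) := by
  intro M hM
  rcases Nat.even_or_odd' M with ⟨k, rfl | rfl⟩
  · obtain ⟨j, rfl⟩ : ∃ j, k = j + 2 := ⟨k - 2, by omega⟩
    have d1 : (2*(j+2))/2 = j+2 := by omega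
    have e1 : 2*(j+2)+1 = 2*j+5 := by omega
    rw [d1, e1]
    nlinarith [Fb_odd j]
  · obtain ⟨j, rfl⟩ : ∃ j, k = j + 1 := ⟨k - 1, by omega⟩
    have d1 : (2*(j+1)+1)/2 = j+1 := by omega
    have e1 : 2*(j+1)+1+1 = 2*j+4 := by omega
    rw [d1, e1]
    nlinarith [Fb_even j]


variable {V : Type} {G : SimpleGraph V}

/-- u is a pendant vertex with unique neighbor z -/
def IsPendant (G : SimpleGraph V) (u z : V) : Prop := ∀ w, G.Adj u w ↔ w = z

lemma IsPendant.adj {u z : V} (h : IsPendant G u z) : G.Adj u z := (h z).mpr rfl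

lemma IsPendant.ne {u z : V} (h : IsPendant G u z) : u ≠ z := h.adj.ne

/-- a path with endpoints different from a pendant vertex avoids it -/
lemma pendant_not_mem_path {u z : V} (hpz : IsPendant G u z) :
    ∀ {a b : V} (p : G.Walk a b), p.IsPath → a ≠ u → b ≠ u → u ∉ p.support := by
  intro a b p
  induction p with
  | nil =>
    intro _ ha _
    simp [Ne.symm ha]
  | @cons a c b h' q ih =>
    intro hp ha hb
    rw [SimpleGraph.Walk.cons_isPath_iff] at hp
    rw [SimpleGraph.Walk.support_cons]
    simp only [List.mem_cons]
    push_neg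
    refine ⟨Ne.symm ha, ?_⟩
    by_cases hc : c = u
    · subst hc
      have haz : a = z := (hpz a).mp h'.symm
      cases q with
      | nil => exact absurd rfl hb
      | @cons _ y _ h2 q2 =>
        have hyz : y = z := (hpz y).mp h2
        exfalso
        apply hp.2
        rw [SimpleGraph.Walk.support_cons]
        have hay : a = y := by rw [haz, hyz]
        rw [hay]
        exact List.mem_cons_of_mem _ (SimpleGraph.Walk.start_mem_support q2)
    · exact ih hp.1 hc hb

/-- walks inside s transfer to the induced subgraph (reachability) -/
lemma reachable_induce_of_walk {s : Set V} :
    ∀ {a b : V} (p : G.Walk a b) (_ : ∀ x ∈ p.support, x ∈ s)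
    (ha : a ∈ s) (hb : b ∈ s), (G.induce s).Reachable ⟨a, ha⟩ ⟨b, hb⟩ := by
  intro a b p
  induction p with
  | nil => intro _ ha _; rfl
  | @cons a c b h' q ih =>
    intro hmem ha hb
    have hc : c ∈ s := hmem c (by simp [SimpleGraph.Walk.support_cons])
    have hadj : (G.induce s).Adj ⟨a, ha⟩ ⟨c, hc⟩ := by
      simp only [comap_adj, Function.Embedding.coe_subtype]
      exact h'
    exact (hadj.reachable).trans (ih (fun x hx => hmem x (by
      rw [SimpleGraph.Walk.support_cons]; exact List.mem_cons_of_mem _ hx)) hc hb)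

/-- distances in G are at most distances in an induced subgraph -/
lemma dist_le_induce_dist {s : Set V} (hr : ∀ a' b' : s, (G.induce s).Reachable a' b')
    (a' b' : s) : G.dist a'.val b'.val ≤ (G.induce s).dist a' b' := by
  obtain ⟨p, hp⟩ := (hr a' b').exists_walk_length_eq_dist
  have := SimpleGraph.dist_le (p.map (SimpleGraph.Embedding.induce s).toHom)
  rw [SimpleGraph.Walk.length_map, hp] at this
  exact this



variable {V : Type} [Fintype V] {G : SimpleGraph V}

lemma dist_le_ecc (v w : V) : G.dist v w ≤ ecc G v := Finset.le_sup (Finset.mem_univ w)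

lemma exists_ecc_eq [Nonempty V] (v : V) : ∃ w, G.dist v w = ecc G v := by
  obtain ⟨w, -, hw⟩ := Finset.exists_mem_eq_sup Finset.univ univ_nonempty (fun w => G.dist v w)
  exact ⟨w, hw.symm⟩

lemma adj_dist_le {a b : V} (h : G.Adj a b) : G.dist a b ≤ 1 := by
  have := SimpleGraph.dist_le (Walk.cons h Walk.nil)
  simpa using this

lemma exists_adj_dist_eq (hconn : G.Connected) {z w : V} {j : ℕ}
    (h : G.dist z w = j + 1) : ∃ w', G.Adj w' w ∧ G.dist z w' = j := by
  obtain ⟨p, hp⟩ := hconn.exists_walk_length_eq_dist z w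
  rw [h] at hp
  have hrev : p.reverse.length = j + 1 := by simp [hp]
  cases hq : p.reverse with
  | nil => rw [hq] at hrev; simp at hrev
  | @cons _ x _ hadj q =>
    refine ⟨x, hadj.symm, ?_⟩
    have hql : q.length = j := by rw [hq] at hrev; simpa using hrev
    have h1 : G.dist z x ≤ j := by
      have := SimpleGraph.dist_le q.reverse
      simpa [hql] using this
    have h2 : j ≤ G.dist z x := by
      have htri : G.dist z w ≤ G.dist z x + G.dist x w := hconn.dist_triangle
      have := adj_dist_le hadj.symm
      omega
    omega

lemma exists_dist_eq' (hconn : G.Connected) {z : V} :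
    ∀ t : ℕ, ∀ w : V, G.dist z w = t → ∀ j, j ≤ t → ∃ v, G.dist z v = j := by
  intro t
  induction t with
  | zero =>
    intro w _ j hj
    interval_cases j
    exact ⟨z, by simp⟩
  | succ s ih =>
    intro w hw j hj
    rcases Nat.eq_or_lt_of_le hj with rfl | hlt
    · exact ⟨w, hw⟩
    · obtain ⟨w', -, hw'⟩ := exists_adj_dist_eq hconn hw
      exact ih w' hw' j (by omega)

/-- exactly-two-neighbors predicate -/
def TwoReg (G : SimpleGraph V) : Prop :=
  ∀ v : V, ∃ a b : V, a ≠ b ∧ ∀ w, G.Adj v w ↔ (w = a ∨ w = b)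

section spheres
variable [DecidableEq V]

noncomputable def sph (G : SimpleGraph V) (z : V) (j : ℕ) : Finset V :=
  Finset.univ.filter (fun v => G.dist z v = j)

lemma mem_sph {z v : V} {j : ℕ} : v ∈ sph G z j ↔ G.dist z v = j := by simp [sph]

lemma sph_one_card (hreg : TwoReg G) (z : V) : (sph G z 1).card ≤ 2 := by
  obtain ⟨a, b, hab, hnb⟩ := hreg z
  have hsub : sph G z 1 ⊆ {a, b} := by
    intro v hv
    rw [mem_sph] at hv
    have : G.Adj z v := SimpleGraph.dist_eq_one_iff_adj.mp hv
    have := (hnb v).mp this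
    simp [this]
  calc (sph G z 1).card ≤ ({a, b} : Finset V).card := Finset.card_le_card hsub
    _ ≤ 2 := Finset.card_insert_le _ _ |>.trans (by simp)

lemma sph_step (hconn : G.Connected) (hreg : TwoReg G) (z : V) {j : ℕ} (hj : 1 ≤ j) :
    (sph G z (j+1)).card ≤ (sph G z j).card := by
  classical
  -- each x in sphere j+1 has a back-neighbor in sphere j
  have hback : ∀ x ∈ sph G z (j+1), ∃ s, G.Adj s x ∧ G.dist z s = j := by
    intro x hx
    exact exists_adj_dist_eq hconn (mem_sph.mp hx)
  choose f hf1 hf2 using hback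
  apply Finset.card_le_card_of_injOn (fun x => if hx : x ∈ sph G z (j+1) then f x hx else z)
  · intro x hx
    simp only [show x ∈ sph G z (j+1) from hx, dif_pos]
    exact mem_sph.mpr (hf2 x hx)
  · intro x1 hx1' x2 hx2' heq
    have hx1 : x1 ∈ sph G z (j+1) := hx1'
    have hx2 : x2 ∈ sph G z (j+1) := hx2'
    simp only [hx1, hx2, dif_pos] at heq
    set s := f x1 hx1 with hs
    have hsx2 : f x2 hx2 = s := heq.symm
    -- s has exactly two neighbors
    obtain ⟨a, b, hab, hnb⟩ := hreg s
    -- s has a back-neighbor c at distance j-1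
    obtain ⟨j', rfl⟩ : ∃ j', j = j' + 1 := ⟨j - 1, by omega⟩
    obtain ⟨c, hc1, hc2⟩ := exists_adj_dist_eq hconn (hf2 x1 hx1)
    have hcs : G.Adj s c := hc1.symm
    have hcmem : c = a ∨ c = b := (hnb c).mp hcs
    have hx1mem : x1 = a ∨ x1 = b := (hnb x1).mp (hf1 x1 hx1)
    have hx2mem : x2 = a ∨ x2 = b := by
      apply (hnb x2).mp
      have := hf1 x2 hx2
      rw [hsx2] at this
      exact this
    have hd1 : G.dist z x1 = j' + 1 + 1 := mem_sph.mp hx1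
    have hd2 : G.dist z x2 = j' + 1 + 1 := mem_sph.mp hx2
    have hx1c : x1 ≠ c := by intro h; rw [h] at hd1; omega
    have hx2c : x2 ≠ c := by intro h; rw [h] at hd2; omega
    rcases hcmem with rfl | rfl
    · rcases hx1mem with rfl | rfl
      · exact absurd rfl hx1c
      · rcases hx2mem with rfl | rfl
        · exact absurd rfl hx2c
        · rfl
    · rcases hx1mem with rfl | rfl
      · rcases hx2mem with rfl | rfl
        · rfl
        · exact absurd rfl hx2c
      · exact absurd rfl hx1c

lemma sph_card_le_two (hconn : G.Connected) (hreg : TwoReg G) (z : V) :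
    ∀ j : ℕ, 1 ≤ j → (sph G z j).card ≤ 2 := by
  intro j hj
  induction j with
  | zero => omega
  | succ i ih =>
    rcases Nat.lt_or_ge i 1 with h | h
    · interval_cases i
      exact sph_one_card hreg z
    · exact (sph_step hconn hreg z h).trans (ih h)

lemma card_eq_sum_sph (z : V) {t : ℕ} (ht : ecc G z = t) :
    Fintype.card V = ∑ j ∈ Finset.range (t+1), (sph G z j).card := by
  rw [← Finset.card_univ]
  apply Finset.card_eq_sum_card_fiberwise (f := fun v => G.dist z v)
  intro x _
  simp only [Finset.mem_coe, Finset.mem_range]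
  have h := dist_le_ecc (G := G) z x
  rw [ht] at h
  omega

lemma ecc_le_half (hconn : G.Connected) (hreg : TwoReg G) [Nonempty V] (z : V) :
    2 * ecc G z ≤ Fintype.card V := by
  classical
  set t := ecc G z with hts
  rcases Nat.eq_zero_or_pos t with h0 | hpos
  · simp [h0]
  obtain ⟨s, hst⟩ : ∃ s, t = s + 1 := ⟨t - 1, by omega⟩
  obtain ⟨w, hw⟩ := exists_ecc_eq (G := G) z
  -- all spheres up to t are nonempty
  have hne : ∀ j, j ≤ t → (sph G z j).Nonempty := by
    intro j hj
    obtain ⟨v, hv⟩ := exists_dist_eq' hconn t w (by rw [hw]) j hj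
    exact ⟨v, mem_sph.mpr hv⟩
  -- middle spheres have at least 2 elements
  have hmid : ∀ j, 1 ≤ j → j < t → 2 ≤ (sph G z j).card := by
    intro j hj1 hjt
    by_contra hcon
    push_neg at hcon
    have hone : ∀ i, j ≤ i → i ≤ t → (sph G z i).card ≤ 1 := by
      intro i hji hit
      induction i with
      | zero => omega
      | succ i2 ih =>
        rcases Nat.eq_or_lt_of_le hji with heq | hlt
        · rw [← heq]; omega
        · have h1 : 1 ≤ i2 := by omega
          exact (sph_step hconn hreg z h1).trans (ih (by omega) (by omega))
    -- sphere t is a singleton {w'}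
    obtain ⟨w', hw'⟩ := hne t le_rfl
    obtain ⟨a, b, hab, hnb⟩ := hreg w'
    have hdw' : G.dist z w' = t := mem_sph.mp hw'
    -- both neighbors are at distance t-1 = s
    have hnbd : ∀ y, G.Adj w' y → G.dist z y = s := by
      intro y hy
      have h1 : G.dist z y ≤ t := dist_le_ecc z y
      have h2 : G.dist z w' ≤ G.dist z y + G.dist y w' := hconn.dist_triangle
      have h3 : G.dist y w' ≤ 1 := adj_dist_le hy.symm
      have h4 : s ≤ G.dist z y := by omega
      rcases Nat.eq_or_lt_of_le h1 with heq | hlt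
      · -- y at distance t: then y ∈ sph t which has card ≤ 1, so y = w', contradiction
        exfalso
        have hyt : y ∈ sph G z t := mem_sph.mpr heq
        have hcard : (sph G z t).card ≤ 1 := hone t (le_of_lt hjt) le_rfl
        have : y = w' := by
          by_contra hne'
          have : 2 ≤ (sph G z t).card := by
            have hsub : ({y, w'} : Finset V) ⊆ sph G z t := by
              intro x hx
              simp only [Finset.mem_insert, Finset.mem_singleton] at hx
              rcases hx with rfl | rfl
              · exact hyt
              · exact hw'
            calc 2 = ({y, w'} : Finset V).card := by rw [Finset.card_insert_of_notMem (by simp [hne'])]; simp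
              _ ≤ _ := Finset.card_le_card hsub
          omega
        exact hy.ne' this
      · omega
    have hda : G.dist z a = s := hnbd a ((hnb a).mpr (Or.inl rfl))
    have hdb : G.dist z b = s := hnbd b ((hnb b).mpr (Or.inr rfl))
    have hcard_s : (sph G z s).card ≤ 1 := hone s (by omega) (by omega)
    have : 2 ≤ (sph G z s).card := by
      have hsub : ({a, b} : Finset V) ⊆ sph G z s := by
        intro x hx
        simp only [Finset.mem_insert, Finset.mem_singleton] at hx
        rcases hx with rfl | rfl
        · exact mem_sph.mpr hda
        · exact mem_sph.mpr hdb
      calc 2 = ({a, b} : Finset V).card := by rw [Finset.card_insert_of_notMem (by simp [hab])]; simp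
        _ ≤ _ := Finset.card_le_card hsub
    omega
  -- now sum over spheres
  have hsum := card_eq_sum_sph (G := G) z (t := t) rfl
  rw [hst] at hsum
  have hsplit : ∑ j ∈ Finset.range (s+1+1), (sph G z j).card =
      (sph G z 0).card + (∑ j ∈ Finset.Ico 1 (s+1), (sph G z j).card) + (sph G z (s+1)).card := by
    have e2 : s+1+1 = s+2 := rfl
    rw [e2, Finset.range_eq_Ico]
    rw [← Finset.sum_Ico_consecutive _ (by omega : 0 ≤ s+1) (by omega : s+1 ≤ s+2)]
    rw [← Finset.sum_Ico_consecutive _ (by omega : 0 ≤ 1) (by omega : 1 ≤ s+1)]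
    rw [Finset.sum_Ico_succ_top (by omega : s+1 ≤ s+1)]
    simp [Finset.sum_Ico_eq_sum_range]
  have h0 : 1 ≤ (sph G z 0).card := Finset.card_pos.mpr (hne 0 (by omega))
  have hlast : 1 ≤ (sph G z (s+1)).card := Finset.card_pos.mpr (hne (s+1) (by omega))
  have hmid_sum : 2 * s ≤ ∑ j ∈ Finset.Ico 1 (s+1), (sph G z j).card := by
    have h := Finset.card_nsmul_le_sum (Finset.Ico 1 (s+1))
      (fun j => (sph G z j).card) 2 (by
        intro j hj
        rw [Finset.mem_Ico] at hj
        exact hmid j hj.1 (by omega))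
    simp only [smul_eq_mul, Nat.card_Ico] at h
    omega
  omega
end spheres



variable {V : Type} [Fintype V] {G : SimpleGraph V}


lemma pendant_or_tworeg (hconn : G.Connected) (hcard : 2 ≤ Fintype.card V)
    (hsize : G.edgeSet.ncard = Fintype.card V) :
    (∃ u z, IsPendant G u z) ∨ TwoReg G := by
  classical
  by_cases hp : ∃ u z, IsPendant G u z
  · exact Or.inl hp
  right
  push_neg at hp
  -- degrees are ≥ 1
  have hdeg1 : ∀ v : V, 0 < G.degree v := by
    intro v
    rw [SimpleGraph.degree_pos_iff_exists_adj]
    obtain ⟨w, hw⟩ := Fintype.exists_ne_of_one_lt_card (by omega) v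
    obtain ⟨p⟩ := hconn.preconnected v w
    cases p with
    | nil => exact absurd rfl hw.symm
    | cons h q => exact ⟨_, h⟩
  -- degrees are ≠ 1
  have hdeg_ne1 : ∀ v : V, G.degree v ≠ 1 := by
    intro v hv
    obtain ⟨z, hz⟩ := Finset.card_eq_one.mp hv
    apply hp v z
    intro w
    rw [← SimpleGraph.mem_neighborFinset, hz, Finset.mem_singleton]
  have hdeg2 : ∀ v : V, 2 ≤ G.degree v := by
    intro v
    have := hdeg1 v; have := hdeg_ne1 v; omega
  -- sum of degrees is 2 * card V
  have hsum : ∑ v : V, G.degree v = 2 * Fintype.card V := by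
    rw [SimpleGraph.sum_degrees_eq_twice_card_edges, ← hsize, SimpleGraph.edgeFinset,
      Set.ncard_eq_toFinset_card']
  -- so all degrees = 2
  have hdeq : ∀ v : V, G.degree v = 2 := by
    by_contra hcon
    push_neg at hcon
    obtain ⟨v0, hv0⟩ := hcon
    have hv03 : 3 ≤ G.degree v0 := by have := hdeg2 v0; omega
    have : 2 * Fintype.card V + 1 ≤ ∑ v : V, G.degree v := by
      calc 2 * Fintype.card V + 1 = ∑ v : V, (2 + if v = v0 then 1 else 0) := by
            rw [Finset.sum_add_distrib, Finset.sum_const, Finset.sum_ite_eq' Finset.univ v0 (fun _ => 1)]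
            simp [Finset.card_univ, two_mul, mul_comm]
        _ ≤ ∑ v : V, G.degree v := by
            apply Finset.sum_le_sum
            intro v _
            by_cases h : v = v0
            · subst h; simp; omega
            · simp [h]; exact hdeg2 v
    omega
  intro v
  obtain ⟨a, b, hab, hnf⟩ := Finset.card_eq_two.mp (hdeq v)
  refine ⟨a, b, hab, fun w => ?_⟩
  rw [← SimpleGraph.mem_neighborFinset, hnf]
  simp

lemma card_subtype_ne [DecidableEq V] (u : V) :
    Fintype.card {x : V // x ≠ u} = Fintype.card V - 1 := by
  have h1 := Fintype.card_subtype_compl (fun x : V => x = u)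
  have h2 : Fintype.card {x : V // x = u} = 1 := Fintype.card_subtype_eq u
  rw [h2] at h1
  convert h1 using 2

lemma edge_ncard_induce_pendant {u z : V} (hpz : IsPendant G u z) :
    (G.induce {x : V | x ≠ u}).edgeSet.ncard + 1 = G.edgeSet.ncard := by
  classical
  set s : Set V := {x : V | x ≠ u} with hs
  set E' : Set (Sym2 V) := Sym2.map (Subtype.val : s → V) '' (G.induce s).edgeSet with hE'
  have hinj : Function.Injective (Sym2.map (Subtype.val : s → V)) :=
    Sym2.map.injective Subtype.val_injective
  have hadj_uz : G.Adj u z := (hpz z).mpr rfl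
  have hcup : G.edgeSet = E' ∪ {s(u, z)} := by
    ext e
    induction e using Sym2.ind with
    | _ a b =>
      simp only [SimpleGraph.mem_edgeSet, Set.mem_union, Set.mem_singleton_iff]
      constructor
      · intro h
        by_cases ha : a = u
        · subst ha
          have : b = z := (hpz b).mp h
          subst this
          exact Or.inr rfl
        by_cases hb : b = u
        · subst hb
          have : a = z := (hpz a).mp h.symm
          subst this
          exact Or.inr (Sym2.eq_swap)
        · left
          refine ⟨s((⟨a, ha⟩ : s), (⟨b, hb⟩ : s)), ?_, ?_⟩
          · simp only [SimpleGraph.mem_edgeSet, comap_adj, Function.Embedding.coe_subtype]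
            exact h
          · rfl
      · intro h
        rcases h with ⟨e', he', heq⟩ | heq
        · induction e' using Sym2.ind with
          | _ x y =>
            have : s(x.val, y.val) = s(a, b) := heq
            rw [Sym2.eq_iff] at this
            have hadj : G.Adj x.val y.val := by
              simpa only [SimpleGraph.mem_edgeSet, comap_adj, Function.Embedding.coe_subtype]
                using he'
            rcases this with ⟨rfl, rfl⟩ | ⟨rfl, rfl⟩
            · exact hadj
            · exact hadj.symm
        · rw [Sym2.eq_iff] at heq
          rcases heq with ⟨rfl, rfl⟩ | ⟨rfl, rfl⟩
          · exact hadj_uz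
          · exact hadj_uz.symm
  have hnotmem : s(u, z) ∉ E' := by
    rintro ⟨e', he', heq⟩
    induction e' using Sym2.ind with
    | _ x y =>
      have : s(x.val, y.val) = s(u, z) := heq
      rw [Sym2.eq_iff] at this
      rcases this with ⟨hx, _⟩ | ⟨_, hy⟩
      · exact x.prop hx
      · exact y.prop hy
  have hfin1 : E'.Finite := Set.toFinite _
  have hfin2 : ({s(u, z)} : Set (Sym2 V)).Finite := Set.finite_singleton _
  rw [hcup, Set.ncard_union_eq (by simpa using hnotmem) hfin1 hfin2]
  rw [Set.ncard_singleton]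
  rw [hE', Set.ncard_image_of_injective _ hinj]

/-- the A-set bound: vertices whose eccentricity is attained at z -/
lemma A_card_le (hconn : G.Connected) [Nonempty V] [DecidableEq V] (z : V)
    (hexd : ∀ j, j ≤ ecc G z → ∃ v, G.dist z v = j) :
    (Finset.univ.filter (fun v => G.dist v z = ecc G v)).card + (ecc G z + 1)/2
      ≤ Fintype.card V := by
  classical
  set e0 := ecc G z with he0
  set k := (e0 + 1)/2 with hk
  set A := Finset.univ.filter (fun v => G.dist v z = ecc G v) with hA
  set B := Finset.univ.filter (fun v => G.dist z v < k) with hB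
  obtain ⟨w, hw⟩ := exists_ecc_eq (G := G) z
  -- every element of A is at distance ≥ k from z
  have hAk : ∀ v ∈ A, k ≤ G.dist z v := by
    intro v hv
    rw [hA, Finset.mem_filter] at hv
    have h1 : G.dist v w ≤ ecc G v := dist_le_ecc v w
    have h2 : G.dist z w ≤ G.dist z v + G.dist v w := hconn.dist_triangle
    have h3 : G.dist v z = G.dist z v := SimpleGraph.dist_comm
    rw [hw] at h2
    rw [h3] at hv
    omega
  have hdisj : Disjoint A B := by
    rw [Finset.disjoint_left]
    intro v hvA hvB
    rw [hB, Finset.mem_filter] at hvB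
    have := hAk v hvA
    omega
  have hBcard : k ≤ B.card := by
    have hex : ∀ j : ℕ, j < k → ∃ v, G.dist z v = j := by
      intro j hj
      exact hexd j (by omega)
    choose f hf using hex
    have hmem : ∀ (j : Fin k), f j.val j.isLt ∈ B := by
      intro j
      rw [hB, Finset.mem_filter]
      refine ⟨Finset.mem_univ _, ?_⟩
      rw [hf j.val j.isLt]
      exact j.isLt
    calc k = (Finset.univ : Finset (Fin k)).card := by simp
      _ ≤ B.card := Finset.card_le_card_of_injOn (fun j => f j.val j.isLt)
          (fun j _ => hmem j) (by
            intro a _ b _ hab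
            have hab' : f a.val a.isLt = f b.val b.isLt := hab
            have ha2 : G.dist z (f a.val a.isLt) = a.val := hf a.val a.isLt
            have hb2 : G.dist z (f b.val b.isLt) = b.val := hf b.val b.isLt
            rw [hab'] at ha2
            exact Fin.ext (by omega))
  calc A.card + k ≤ A.card + B.card := by omega
    _ = (A ∪ B).card := (Finset.card_union_of_disjoint hdisj).symm
    _ ≤ (Finset.univ : Finset V).card := Finset.card_le_card (Finset.subset_univ _)
    _ = Fintype.card V := Finset.card_univ


lemma ecc_le {V : Type} [Fintype V] {G : SimpleGraph V} {v : V} {k : ℕ}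
    (h : ∀ w, G.dist v w ≤ k) : ecc G v ≤ k :=
  Finset.sup_le fun w _ => h w

lemma induce_connected_of_pendant {V : Type} {G : SimpleGraph V} {u z : V}
    (hconn : G.Connected) (hpz : IsPendant G u z) :
    (G.induce {x : V | x ≠ u}).Connected := by
  classical
  rw [SimpleGraph.connected_iff]
  constructor
  · intro a' b'
    obtain ⟨p⟩ := hconn.preconnected a'.val b'.val
    set q := p.toPath with hq
    have hnot : u ∉ (q : G.Walk a'.val b'.val).support :=
      pendant_not_mem_path hpz _ q.prop a'.prop b'.prop
    have := reachable_induce_of_walk (s := {x : V | x ≠ u}) (q : G.Walk a'.val b'.val)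
      (fun x hx => by
        intro hxu
        exact hnot (hxu ▸ hx)) a'.prop b'.prop
    exact this
  · exact ⟨⟨z, fun h => hpz.ne h.symm⟩⟩

theorem key : ∀ m : ℕ, 3 ≤ m → ∀ (V : Type) [Fintype V] (G : SimpleGraph V),
    Fintype.card V = m → G.Connected → G.edgeSet.ncard = m →
    (∀ v, ecc G v ≤ m - 2) ∧
    ((∃ u z, IsPendant G u z) → totalEcc G ≤ Fb m) := by
  intro m
  induction m using Nat.strong_induction_on with
  | _ m IH =>
  intro hm3 V _ G hcard hconn hsize
  classical
  haveI hne : Nonempty V := Fintype.card_pos_iff.mp (by omega)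
  by_cases hpend : ∃ u z, IsPendant G u z
  case neg =>
    have hreg : TwoReg G :=
      (pendant_or_tworeg hconn (by omega) (by rw [hcard]; exact hsize)).resolve_left hpend
    refine ⟨fun v => ?_, fun h => absurd h hpend⟩
    have := ecc_le_half hconn hreg v
    rw [hcard] at this
    omega
  case pos =>
  obtain ⟨u, z, hpz⟩ := hpend
  -- rule out m = 3
  rcases Nat.lt_or_ge m 4 with hm4 | hm4
  · exfalso
    have hm3' : m = 3 := by omega
    have hdegu : G.degree u = 1 := by
      have : G.neighborFinset u = {z} := by
        ext w
        rw [SimpleGraph.mem_neighborFinset, Finset.mem_singleton]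
        exact hpz w
      rw [SimpleGraph.degree, this, Finset.card_singleton]
    have hsum : ∑ v : V, G.degree v = 2 * m := by
      rw [SimpleGraph.sum_degrees_eq_twice_card_edges, ← hsize, SimpleGraph.edgeFinset,
        Set.ncard_eq_toFinset_card']
    have hsplit : G.degree u + ∑ v ∈ Finset.univ.erase u, G.degree v = ∑ v : V, G.degree v :=
      Finset.add_sum_erase Finset.univ (fun v => G.degree v) (Finset.mem_univ u)
    have hbound : ∑ v ∈ Finset.univ.erase u, G.degree v ≤ (Finset.univ.erase u).card * 2 := by
      apply Finset.sum_le_card_nsmul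
      intro v _
      have := G.degree_lt_card_verts v
      omega
    have hce : (Finset.univ.erase u).card = m - 1 := by
      rw [Finset.card_erase_of_mem (Finset.mem_univ u), Finset.card_univ, hcard]
    omega
  -- main case : m ≥ 4, u is pendant with neighbor z
  set s : Set V := {x : V | x ≠ u} with hs
  set G' := G.induce s with hG'
  have hconn' : G'.Connected := induce_connected_of_pendant hconn hpz
  have hr' : ∀ a' b' : ↥s, G'.Reachable a' b' := fun a b => hconn'.preconnected a b
  have hdle : ∀ a' b' : ↥s, G.dist a'.val b'.val ≤ G'.dist a' b' :=
    fun a b => dist_le_induce_dist hr' a b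
  have hzs : z ∈ s := fun h => hpz.ne h.symm
  set z' : ↥s := ⟨z, hzs⟩ with hz'
  set M := m - 1 with hM
  have hMm : m = M + 1 := by omega
  have hM3 : 3 ≤ M := by omega
  have hcard' : Fintype.card ↥s = M := by
    have h1 : Fintype.card ↥s = Fintype.card {x : V // x ≠ u} :=
      Fintype.card_congr (Equiv.subtypeEquivRight (fun x => Iff.rfl))
    rw [h1, card_subtype_ne u, hcard]
  have hsize' : G'.edgeSet.ncard = M := by
    have h := edge_ncard_induce_pendant (G := G) hpz
    rw [← hs] at h
    rw [← hG'] at h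
    rw [hsize] at h
    omega
  haveI hne' : Nonempty ↥s := Fintype.card_pos_iff.mp (by omega)
  -- induction hypothesis applied to G'
  obtain ⟨ha', hb'⟩ := IH M (by omega) (by omega) ↥s G' hcard' hconn' hsize'
  have he0 : ecc G' z' ≤ M - 2 := ha' z'
  -- eccentricity bounds in G
  have hup : ∀ v' : ↥s, ecc G v'.val ≤ max (ecc G' v') (G'.dist v' z' + 1) := by
    intro v'
    apply ecc_le
    intro w
    by_cases hw : w = u
    · rw [hw]
      have h1 : G.dist v'.val u ≤ G.dist v'.val z + G.dist z u := hconn.dist_triangle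
      have h2 : G.dist z u ≤ 1 := adj_dist_le hpz.adj.symm
      have h3 : G.dist v'.val z ≤ G'.dist v' z' := hdle v' z'
      have : G.dist v'.val u ≤ G'.dist v' z' + 1 := by omega
      exact this.trans (le_max_right _ _)
    · have h1 : G.dist v'.val w ≤ G'.dist v' ⟨w, hw⟩ := hdle v' ⟨w, hw⟩
      have h2 : G'.dist v' ⟨w, hw⟩ ≤ ecc G' v' := dist_le_ecc _ _
      exact (h1.trans h2).trans (le_max_left _ _)
  have heccu : ecc G u ≤ ecc G' z' + 1 := by
    apply ecc_le
    intro w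
    by_cases hw : w = u
    · rw [hw]
      simp [SimpleGraph.dist_self]
    · have h1 : G.dist u w ≤ G.dist u z + G.dist z w := hconn.dist_triangle
      have h2 : G.dist u z ≤ 1 := adj_dist_le hpz.adj
      have h3 : G.dist z w ≤ G'.dist z' ⟨w, hw⟩ := hdle z' ⟨w, hw⟩
      have h4 : G'.dist z' ⟨w, hw⟩ ≤ ecc G' z' := dist_le_ecc _ _
      omega
  have hdist_le_ecc' : ∀ v' : ↥s, G'.dist v' z' ≤ ecc G' v' := fun v' => dist_le_ecc _ _
  constructor
  · -- (a) : all eccentricities ≤ m - 2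
    intro v
    by_cases hv : v = u
    · subst hv
      omega
    · have h1 : ecc G v ≤ max (ecc G' ⟨v, hv⟩) (G'.dist ⟨v, hv⟩ z' + 1) := hup ⟨v, hv⟩
      have h2 := ha' ⟨v, hv⟩
      have h3 := hdist_le_ecc' ⟨v, hv⟩
      have h4 : max (ecc G' ⟨v, hv⟩) (G'.dist ⟨v, hv⟩ z' + 1) ≤ M - 1 := by
        apply max_le <;> omega
      omega
  -- (b) : total eccentricity bound
  intro _
  -- split total over u and the rest
  have hsplit : ecc G u + ∑ v ∈ Finset.univ.erase u, ecc G v = totalEcc G :=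
    Finset.add_sum_erase _ _ (Finset.mem_univ u)
  have hsub : ∑ v ∈ Finset.univ.erase u, ecc G v = ∑ v' : ↥s, ecc G v'.val := by
    apply Finset.sum_subtype
    intro x
    simp [hs]
  -- now two cases on the structure of G'
  rcases pendant_or_tworeg hconn' (by omega) (by rw [hcard']; exact hsize') with hp' | hreg'
  · -- G' has a pendant vertex : use the A-set ledger
    have htau' : totalEcc G' ≤ Fb M := hb' hp'
    set A : Finset ↥s := Finset.univ.filter (fun v' => G'.dist v' z' = ecc G' v') with hA
    have hAcard : A.card + (ecc G' z' + 1)/2 ≤ M := by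
      have hexd : ∀ j, j ≤ ecc G' z' → ∃ v', G'.dist z' v' = j := by
        intro j hj
        obtain ⟨w, hw⟩ := exists_ecc_eq (G := G') z'
        exact exists_dist_eq' hconn' (ecc G' z') w hw j hj
      have := A_card_le hconn' z' hexd
      rw [hcard'] at this
      exact this
    have hpoint : ∀ v' : ↥s, ecc G v'.val ≤ ecc G' v' + (if v' ∈ A then 1 else 0) := by
      intro v'
      have h1 := hup v'
      by_cases hvA : v' ∈ A
      · simp only [hvA, if_pos]
        have := hdist_le_ecc' v'
        have : max (ecc G' v') (G'.dist v' z' + 1) ≤ ecc G' v' + 1 := by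
          apply max_le <;> omega
        omega
      · simp only [hvA, if_neg, not_false_iff, add_zero]
        have h2 : G'.dist v' z' ≠ ecc G' v' := by
          intro h
          exact hvA (Finset.mem_filter.mpr ⟨Finset.mem_univ _, h⟩)
        have h3 := hdist_le_ecc' v'
        have : max (ecc G' v') (G'.dist v' z' + 1) ≤ ecc G' v' := by
          apply max_le <;> omega
        omega
    have hsum2 : ∑ v' : ↥s, ecc G v'.val ≤ totalEcc G' + A.card := by
      calc ∑ v' : ↥s, ecc G v'.val
          ≤ ∑ v' : ↥s, (ecc G' v' + (if v' ∈ A then 1 else 0)) :=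
            Finset.sum_le_sum (fun v' _ => hpoint v')
        _ = totalEcc G' + ∑ v' : ↥s, (if v' ∈ A then 1 else 0) := by
            rw [Finset.sum_add_distrib]; rfl
        _ = totalEcc G' + A.card := by
            congr 1
            rw [Finset.sum_ite_mem, Finset.univ_inter, Finset.sum_const, smul_eq_mul, mul_one]
    have hFbm : Fb m = Fb M + M + M/2 := by
      rw [hMm]
      exact Fb_succ hM3
    omega
  · -- G' is 2-regular : cycle + pendant ledger
    have hhalf : ∀ v' : ↥s, 2 * ecc G' v' ≤ M := by
      intro v'
      have := ecc_le_half hconn' hreg' v'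
      rw [hcard'] at this
      exact this
    set D := sph G' z' (M/2) with hD
    have hDcard : D.card ≤ 2 := sph_card_le_two hconn' hreg' z' (M/2) (by omega)
    have hpoint : ∀ v' : ↥s, ecc G v'.val ≤ M/2 + (if v' ∈ D then 1 else 0) := by
      intro v'
      have h1 := hup v'
      have h2 := hhalf v'
      by_cases hvD : v' ∈ D
      · simp only [hvD, if_pos]
        have h3 : G'.dist z' v' = M/2 := mem_sph.mp hvD
        have h4 : G'.dist v' z' = M/2 := by rw [SimpleGraph.dist_comm]; exact h3
        have : max (ecc G' v') (G'.dist v' z' + 1) ≤ M/2 + 1 := by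
          apply max_le <;> omega
        omega
      · simp only [hvD, if_neg, not_false_iff, add_zero]
        have h3 : G'.dist z' v' ≠ M/2 := fun h => hvD (mem_sph.mpr h)
        have h4 : G'.dist z' v' ≤ ecc G' z' := dist_le_ecc _ _
        have h5 : 2 * ecc G' z' ≤ M := hhalf z'
        have h6 : G'.dist v' z' = G'.dist z' v' := SimpleGraph.dist_comm
        have : max (ecc G' v') (G'.dist v' z' + 1) ≤ M/2 := by
          apply max_le <;> omega
        omega
    have hsum2 : ∑ v' : ↥s, ecc G v'.val ≤ M * (M/2) + D.card := by
      calc ∑ v' : ↥s, ecc G v'.val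
          ≤ ∑ v' : ↥s, (M/2 + (if v' ∈ D then 1 else 0)) :=
            Finset.sum_le_sum (fun v' _ => hpoint v')
        _ = M * (M/2) + D.card := by
            rw [Finset.sum_add_distrib, Finset.sum_const, Finset.card_univ, hcard',
              smul_eq_mul, Finset.sum_ite_mem, Finset.univ_inter, Finset.sum_const,
              smul_eq_mul, mul_one]
    have hcp := cyclePendant_le_Fb M hM3
    rw [← hMm] at hcp
    have h5 : 2 * ecc G' z' ≤ M := hhalf z'
    omega

/-! ### Lower bound for the total eccentricity of U₂ -/

def lbv (n j : ℕ) : ℕ := if j = 0 then n - 2 else if 2*j ≤ n then n - 1 - j else j - 1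

lemma walk_lip {W : Type} {H : SimpleGraph W} (φ : W → ℤ)
    (hφ : ∀ a b, H.Adj a b → |φ a - φ b| ≤ 1) :
    ∀ {a b : W} (p : H.Walk a b), |φ a - φ b| ≤ (p.length : ℤ) := by
  intro a b p
  induction p with
  | nil => simp
  | @cons a c b h q ih =>
    have h1 : |φ a - φ b| ≤ |φ a - φ c| + |φ c - φ b| := by
      have := abs_sub_abs_le_abs_sub (φ a - φ b) 0
      calc |φ a - φ b| = |(φ a - φ c) + (φ c - φ b)| := by ring_nf
        _ ≤ |φ a - φ c| + |φ c - φ b| := abs_add_le _ _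
    have h2 := hφ a c h
    rw [SimpleGraph.Walk.length_cons]
    push_cast
    omega
    
lemma dist_lip {W : Type} {H : SimpleGraph W} (φ : W → ℤ)
    (hφ : ∀ a b, H.Adj a b → |φ a - φ b| ≤ 1) {a b : W} (hr : H.Reachable a b) :
    |φ a - φ b| ≤ (H.dist a b : ℤ) := by
  obtain ⟨p, hp⟩ := hr.exists_walk_length_eq_dist
  rw [← hp]
  exact walk_lip φ hφ p

section U2
variable {n : ℕ} (hn : 5 ≤ n)

/-- potential function for U₂ : φ(v_j) = j+1 except φ(v_0)=2. -/
private def φU (n : ℕ) (j : Fin n) : ℤ := if j.val = 0 then 2 else (j.val + 1 : ℤ)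

lemma U2_lip (h0 : (0:ℕ) < n) (h2 : 2 < n) :
    ∀ a b : Fin n, (pathGraph n ⊔
      fromEdgeSet {s((⟨0, h0⟩ : Fin n), (⟨2, h2⟩ : Fin n))}).Adj a b →
      |φU n a - φU n b| ≤ 1 := by
  intro a b hab
  rcases hab with hab | hab
  · rw [SimpleGraph.pathGraph_adj] at hab
    unfold φU
    rcases hab with h | h <;> split_ifs <;>
      refine abs_le.mpr ⟨?_, ?_⟩ <;> omega
  · rw [SimpleGraph.fromEdgeSet_adj] at hab
    obtain ⟨hmem, hne⟩ := hab
    rw [Set.mem_singleton_iff, Sym2.eq_iff] at hmem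
    unfold φU
    rcases hmem with ⟨ha, hb⟩ | ⟨ha, hb⟩ <;>
      rw [ha, hb] <;> norm_num

lemma U2_connected (h0 : (0:ℕ) < n) (h2 : 2 < n) :
    (pathGraph n ⊔ fromEdgeSet {s((⟨0, h0⟩ : Fin n), (⟨2, h2⟩ : Fin n))}).Connected := by
  apply SimpleGraph.Connected.mono le_sup_left
  obtain ⟨k, rfl⟩ : ∃ k, n = k + 1 := ⟨n - 1, by omega⟩
  exact SimpleGraph.pathGraph_connected k

lemma U2_ecc_ge (h0 : (0:ℕ) < n) (h2 : 2 < n) (hn5 : 5 ≤ n) (i : Fin n) :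
    lbv n i.val ≤ ecc (pathGraph n ⊔
      fromEdgeSet {s((⟨0, h0⟩ : Fin n), (⟨2, h2⟩ : Fin n))}) i := by
  set U : SimpleGraph (Fin n) :=
    pathGraph n ⊔ fromEdgeSet {s((⟨0, h0⟩ : Fin n), (⟨2, h2⟩ : Fin n))} with hU
  have hconn : U.Connected := U2_connected h0 h2
  have hlip := U2_lip (n := n) h0 h2
  have hL := dist_lip (φU n) hlip (hconn.preconnected i ⟨n - 1, by omega⟩)
  have hZ := dist_lip (φU n) hlip (hconn.preconnected i ⟨0, h0⟩)
  have hφl : φU n (⟨n - 1, by omega⟩ : Fin n) = (n : ℤ) := by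
    unfold φU
    simp only [Fin.val_mk]
    rw [if_neg (by omega)]
    omega
  have hφz : φU n (⟨0, h0⟩ : Fin n) = 2 := by
    unfold φU
    simp
  rw [hφl] at hL
  rw [hφz] at hZ
  have h2e : U.dist i ⟨n - 1, by omega⟩ ≤ ecc U i := dist_le_ecc _ _
  have h3e : U.dist i ⟨0, h0⟩ ≤ ecc U i := dist_le_ecc _ _
  have hiv := i.isLt
  by_cases hi : i.val = 0
  · have hφi : φU n i = 2 := by unfold φU; rw [if_pos hi]
    rw [hφi] at hL
    have habs : (n:ℤ) - 2 ≤ |(2:ℤ) - n| := by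
      calc (n:ℤ) - 2 = -((2:ℤ) - n) := by ring
        _ ≤ |(2:ℤ) - n| := neg_le_abs _
    have h1 : (n:ℤ) - 2 ≤ (U.dist i ⟨n - 1, by omega⟩ : ℤ) := le_trans habs hL
    simp only [lbv, if_pos hi]
    omega
  · have hφi : φU n i = (i.val:ℤ) + 1 := by unfold φU; rw [if_neg hi]
    rw [hφi] at hL hZ
    have hA : (n:ℤ) - 1 - i.val ≤ (U.dist i ⟨n - 1, by omega⟩ : ℤ) := by
      calc (n:ℤ) - 1 - i.val = -((i.val:ℤ) + 1 - n) := by ring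
        _ ≤ |(i.val:ℤ) + 1 - n| := neg_le_abs _
        _ ≤ _ := hL
    have hB : (i.val:ℤ) - 1 ≤ (U.dist i ⟨0, h0⟩ : ℤ) := by
      calc (i.val:ℤ) - 1 = ((i.val:ℤ) + 1 - 2) := by ring
        _ ≤ |(i.val:ℤ) + 1 - 2| := le_abs_self _
        _ ≤ _ := hZ
    simp only [lbv, if_neg hi]
    split_ifs with hc
    · omega
    · omega
end U2

lemma filter_half (n : ℕ) (hn : 2 ≤ n) :
    (Finset.range n).filter (fun j => 2*j ≤ n) = Finset.range (n/2 + 1) := by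
  ext j
  simp only [Finset.mem_filter, Finset.mem_range]
  omega

lemma sum_ind_half (n : ℕ) (hn : 2 ≤ n) :
    ∑ i : Fin n, (if 2*i.val ≤ n then 1 else 0) = n/2 + 1 := by
  rw [Fin.sum_univ_eq_sum_range (fun j => if 2*j ≤ n then 1 else 0) n]
  have h1 : ∑ j ∈ Finset.range n, (if 2*j ≤ n then (1:ℕ) else 0)
      = ∑ j ∈ (Finset.range n).filter (fun j => 2*j ≤ n), 1 :=
    (Finset.sum_filter _ _).symm
  rw [h1, filter_half n hn, Finset.sum_const, smul_eq_mul, mul_one, Finset.card_range]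

lemma sum_lbv : ∀ n, 5 ≤ n → Fb n ≤ ∑ i : Fin n, lbv n i.val := by
  intro n hn
  induction n, hn using Nat.le_induction with
  | base => decide
  | succ n hn ih =>
    rw [Fin.sum_univ_castSucc]
    have hlast : lbv (n+1) (Fin.last n).val = n - 1 := by
      simp only [Fin.val_last, lbv]
      split_ifs <;> omega
    have hpoint : ∀ i : Fin n,
        lbv (n+1) (Fin.castSucc i).val = lbv n i.val + (if 2*i.val ≤ n then 1 else 0) := by
      intro i
      have hiv := i.isLt
      simp only [Fin.coe_castSucc, lbv]
      split_ifs <;> omega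
    have hsum : ∑ i : Fin n, lbv (n+1) (Fin.castSucc i).val
        = (∑ i : Fin n, lbv n i.val) + (n/2 + 1) := by
      rw [← sum_ind_half n (by omega)]
      rw [← Finset.sum_add_distrib]
      exact Finset.sum_congr rfl (fun i _ => hpoint i)
    rw [hsum, hlast]
    have hrec : Fb (n+1) = Fb n + n + n/2 := Fb_succ (by omega)
    omega

/-- Among all `n`-vertex unicyclic graphs (`n ≥ 5`), the graph `U₂` obtained from the
path `v₁v₂⋯vₙ` by adding the edge `v₁v₃` has the maximal total-eccentricity index. -/
theorem maximal_unicyclic (n : ℕ) (hn : 5 ≤ n)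
    (V : Type) [Fintype V] (G : SimpleGraph V)
    (hcard : Fintype.card V = n)
    (hconn : G.Connected) (hsize : G.edgeSet.ncard = n) :
    totalEcc G ≤
      totalEcc (pathGraph n ⊔
        fromEdgeSet {s((⟨0, by omega⟩ : Fin n), (⟨2, by omega⟩ : Fin n))}) := by
  classical
  have h0 : (0:ℕ) < n := by omega
  have h2 : (2:ℕ) < n := by omega
  -- upper bound: totalEcc G ≤ Fb n
  obtain ⟨ha, hb⟩ := key n (by omega) V G hcard hconn hsize
  have hupper : totalEcc G ≤ Fb n := by
    by_cases hpend : ∃ u z, IsPendant G u z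
    · exact hb hpend
    · have hreg : TwoReg G :=
        (pendant_or_tworeg hconn (by omega) (by rw [hcard]; exact hsize)).resolve_left hpend
      haveI : Nonempty V := Fintype.card_pos_iff.mp (by omega)
      have hhalf : ∀ v : V, ecc G v ≤ n/2 := by
        intro v
        have := ecc_le_half hconn hreg v
        rw [hcard] at this
        omega
      have : totalEcc G ≤ n * (n/2) := by
        calc totalEcc G = ∑ v : V, ecc G v := rfl
          _ ≤ ∑ _v : V, n/2 := Finset.sum_le_sum (fun v _ => hhalf v)
          _ = n * (n/2) := by rw [Finset.sum_const, Finset.card_univ, hcard, smul_eq_mul]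
      exact this.trans (cycle_le_Fb n hn)
  -- lower bound for U₂
  have hlower : Fb n ≤ totalEcc (pathGraph n ⊔
      fromEdgeSet {s((⟨0, h0⟩ : Fin n), (⟨2, h2⟩ : Fin n))}) := by
    calc Fb n ≤ ∑ i : Fin n, lbv n i.val := sum_lbv n hn
      _ ≤ ∑ i : Fin n, ecc (pathGraph n ⊔
          fromEdgeSet {s((⟨0, h0⟩ : Fin n), (⟨2, h2⟩ : Fin n))}) i :=
        Finset.sum_le_sum (fun i _ => U2_ecc_ge h0 h2 hn i)
      _ = totalEcc _ := rfl
  exact hupper.trans hlower
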